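/- For a quasitriangular Hopf algebra H with universal R-matrix R and H-modules U, V, W, the braiding maps C^R satisfy the hexagon-type braid relation: (C^R_{V,W} ⊗ id_U)(id_V ⊗ C^R_{U,W})(C^R_{U,V} ⊗ id_W) = (id_W ⊗ C^R_{U,V})(C^R_{U,W} ⊗ id_V)(id_U ⊗ C^R_{V,W}) as linear maps U ⊗ V ⊗ W → W ⊗ V ⊗ U. In particular, taking U = V = W, the operator C^R_{V,V} is a solution of the braided Yang–Baxter equation on V ⊗ V. -/

import Mathlib

open TensorProduct

section

variable (k : Type*) [CommRing k] (H : Type*) [Ring H] [HopfAlgebra k H]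

/-- The opposite coproduct `Δᵒᵖ = τ ∘ Δ`. -/
noncomputable def comulOp : H →ₗ[k] H ⊗[k] H :=
  (TensorProduct.comm k H H).toLinearMap ∘ₗ Coalgebra.comul

/-- `x ⊗ y ↦ (x ⊗ y) ⊗ 1`. -/
noncomputable def emb12 : H ⊗[k] H →ₗ[k] (H ⊗[k] H) ⊗[k] H :=
  (TensorProduct.mk k (H ⊗[k] H) H).flip 1

/-- `x ⊗ y ↦ (x ⊗ 1) ⊗ y`. -/
noncomputable def emb13 : H ⊗[k] H →ₗ[k] (H ⊗[k] H) ⊗[k] H :=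
  TensorProduct.map ((TensorProduct.mk k H H).flip 1) LinearMap.id

/-- `x ⊗ y ↦ (1 ⊗ x) ⊗ y`. -/
noncomputable def emb23 : H ⊗[k] H →ₗ[k] (H ⊗[k] H) ⊗[k] H :=
  TensorProduct.map (TensorProduct.mk k H H 1) LinearMap.id

/-- `R ∈ H ⊗ H` is a universal R-matrix for the quasitriangular Hopf algebra `H`. -/
structure IsUniversalRMatrix (R : H ⊗[k] H) : Prop where
  isUnit : IsUnit R
  intertwine : ∀ x : H, comulOp k H x * R = R * Coalgebra.comul x
  coproduct_left :
    TensorProduct.map (Coalgebra.comul : H →ₗ[k] H ⊗[k] H) LinearMap.id R =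
      emb13 k H R * emb23 k H R
  coproduct_right :
    (TensorProduct.assoc k H H H).symm
        (TensorProduct.map LinearMap.id (Coalgebra.comul : H →ₗ[k] H ⊗[k] H) R) =
      emb13 k H R * emb12 k H R

variable {V W : Type*} [AddCommGroup V] [Module k V] [AddCommGroup W] [Module k W]

/-- The action of `H ⊗ H` on `V ⊗ W`. -/
noncomputable def actTens (ρV : H →ₐ[k] Module.End k V) (ρW : H →ₐ[k] Module.End k W) :
    H ⊗[k] H →ₗ[k] (V ⊗[k] W →ₗ[k] V ⊗[k] W) :=
  TensorProduct.homTensorHomMap (RingHom.id k) V W V W ∘ₗ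
    TensorProduct.map ρV.toLinearMap ρW.toLinearMap

/-- The braiding map `C^R_{V,W}(v ⊗ w) = Σᵢ (tᵢ ▷ w) ⊗ (sᵢ ▷ v)`. -/
noncomputable def braidMap (ρV : H →ₐ[k] Module.End k V) (ρW : H →ₐ[k] Module.End k W)
    (R : H ⊗[k] H) : V ⊗[k] W →ₗ[k] W ⊗[k] V :=
  (TensorProduct.comm k V W).toLinearMap ∘ₗ actTens k H ρV ρW R

end

section Aux

variable (k : Type*) [CommRing k] (H : Type*) [Ring H] [HopfAlgebra k H]

lemma emb12_apply (z : H ⊗[k] H) : emb12 k H z = z ⊗ₜ[k] (1 : H) := rfl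

lemma emb13_tmul (x y : H) : emb13 k H (x ⊗ₜ[k] y) = (x ⊗ₜ[k] (1 : H)) ⊗ₜ[k] y := rfl

lemma emb23_tmul (x y : H) : emb23 k H (x ⊗ₜ[k] y) = ((1 : H) ⊗ₜ[k] x) ⊗ₜ[k] y := rfl

/-- The swap of the first two tensor factors, as a multiplicative map. -/
noncomputable def swap12 : (H ⊗[k] H) ⊗[k] H →ₐ[k] (H ⊗[k] H) ⊗[k] H :=
  Algebra.TensorProduct.map (Algebra.TensorProduct.comm k H H).toAlgHom (AlgHom.id k H)

lemma swap12_toLinearMap :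
    (swap12 k H).toLinearMap =
      TensorProduct.map (TensorProduct.comm k H H).toLinearMap LinearMap.id := by
  apply TensorProduct.ext'
  intro x y
  induction x using TensorProduct.induction_on with
  | zero => simp
  | tmul a b => rfl
  | add a b ha hb =>
      simp only [add_tmul, map_add, ha, hb]

lemma swap12_emb13 (z : H ⊗[k] H) : swap12 k H (emb13 k H z) = emb23 k H z := by
  induction z using TensorProduct.induction_on with
  | zero => simp
  | tmul x y =>
      rw [emb13_tmul, emb23_tmul]
      show ((TensorProduct.comm k H H) (x ⊗ₜ 1)) ⊗ₜ y = _
      simp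
  | add a b ha hb => simp [map_add, ha, hb]

lemma swap12_emb23 (z : H ⊗[k] H) : swap12 k H (emb23 k H z) = emb13 k H z := by
  induction z using TensorProduct.induction_on with
  | zero => simp
  | tmul x y =>
      rw [emb13_tmul, emb23_tmul]
      show ((TensorProduct.comm k H H) (1 ⊗ₜ x)) ⊗ₜ y = _
      simp
  | add a b ha hb => simp [map_add, ha, hb]

/-- The quantum Yang–Baxter equation `R₁₂ R₁₃ R₂₃ = R₂₃ R₁₃ R₁₂`. -/
lemma qybe (R : H ⊗[k] H) (hR : IsUniversalRMatrix k H R) :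
    emb12 k H R * emb13 k H R * emb23 k H R = emb23 k H R * emb13 k H R * emb12 k H R := by
  have key : ∀ z : H ⊗[k] H,
      emb12 k H R * TensorProduct.map (Coalgebra.comul : H →ₗ[k] H ⊗[k] H) LinearMap.id z =
        TensorProduct.map (comulOp k H) LinearMap.id z * emb12 k H R := by
    intro z
    induction z using TensorProduct.induction_on with
    | zero => simp
    | tmul x y =>
        rw [TensorProduct.map_tmul, TensorProduct.map_tmul, emb12_apply,
          Algebra.TensorProduct.tmul_mul_tmul, Algebra.TensorProduct.tmul_mul_tmul,
          LinearMap.id_coe, id_eq, one_mul, mul_one, hR.intertwine x]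
    | add a b ha hb => simp [map_add, mul_add, add_mul, ha, hb]
  have hop : TensorProduct.map (comulOp k H) (LinearMap.id : H →ₗ[k] H) R =
      emb23 k H R * emb13 k H R := by
    have h1 : TensorProduct.map (comulOp k H) (LinearMap.id : H →ₗ[k] H) =
        (swap12 k H).toLinearMap ∘ₗ
          TensorProduct.map (Coalgebra.comul : H →ₗ[k] H ⊗[k] H) LinearMap.id := by
      rw [swap12_toLinearMap, ← TensorProduct.map_comp]
      rfl
    rw [h1, LinearMap.comp_apply, hR.coproduct_left, AlgHom.toLinearMap_apply, map_mul,
      swap12_emb13, swap12_emb23]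
  calc emb12 k H R * emb13 k H R * emb23 k H R
      = emb12 k H R * (emb13 k H R * emb23 k H R) := by rw [mul_assoc]
    _ = emb12 k H R * TensorProduct.map (Coalgebra.comul : H →ₗ[k] H ⊗[k] H) LinearMap.id R := by
          rw [hR.coproduct_left]
    _ = TensorProduct.map (comulOp k H) LinearMap.id R * emb12 k H R := key R
    _ = emb23 k H R * emb13 k H R * emb12 k H R := by rw [hop]

variable {U V W : Type*} [AddCommGroup U] [Module k U] [AddCommGroup V] [Module k V]
  [AddCommGroup W] [Module k W]

/-- The action of `(H ⊗ H) ⊗ H` on `(U ⊗ V) ⊗ W`. -/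
noncomputable def act3 (ρU : H →ₐ[k] Module.End k U) (ρV : H →ₐ[k] Module.End k V)
    (ρW : H →ₐ[k] Module.End k W) :
    (H ⊗[k] H) ⊗[k] H →ₗ[k] ((U ⊗[k] V) ⊗[k] W →ₗ[k] (U ⊗[k] V) ⊗[k] W) :=
  TensorProduct.homTensorHomMap (RingHom.id k) (U ⊗[k] V) W (U ⊗[k] V) W ∘ₗ
    TensorProduct.map (actTens k H ρU ρV) ρW.toLinearMap

/-- The permutation `(u ⊗ v) ⊗ w ↦ (w ⊗ v) ⊗ u`. -/
noncomputable def perm3 : (U ⊗[k] V) ⊗[k] W →ₗ[k] (W ⊗[k] V) ⊗[k] U :=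
  (TensorProduct.assoc k W V U).symm.toLinearMap ∘ₗ
    TensorProduct.map LinearMap.id (TensorProduct.comm k U V).toLinearMap ∘ₗ
      (TensorProduct.comm k (U ⊗[k] V) W).toLinearMap

variable (ρU : H →ₐ[k] Module.End k U) (ρV : H →ₐ[k] Module.End k V)
  (ρW : H →ₐ[k] Module.End k W)

lemma actTens_tmul (s t : H) :
    actTens k H ρV ρW (s ⊗ₜ[k] t) = TensorProduct.map (ρV s) (ρW t) := by
  simp [actTens, TensorProduct.homTensorHomMap_apply]

lemma braidMap_tmul (s t : H) (v : V) (w : W) :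
    braidMap k H ρV ρW (s ⊗ₜ[k] t) (v ⊗ₜ[k] w) = (ρW t w) ⊗ₜ[k] (ρV s v) := by
  simp [braidMap, actTens_tmul]

lemma braidMap_zero : braidMap k H ρV ρW 0 = 0 := by
  simp [braidMap]

lemma braidMap_add (x y : H ⊗[k] H) :
    braidMap k H ρV ρW (x + y) = braidMap k H ρV ρW x + braidMap k H ρV ρW y := by
  simp [braidMap, LinearMap.comp_add]

lemma act3_tmul (a b c : H) :
    act3 k H ρU ρV ρW ((a ⊗ₜ[k] b) ⊗ₜ[k] c) =
      TensorProduct.map (TensorProduct.map (ρU a) (ρV b)) (ρW c) := by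
  simp [act3, actTens_tmul, TensorProduct.homTensorHomMap_apply]

lemma perm3_tmul (u : U) (v : V) (w : W) :
    perm3 k (U := U) (V := V) (W := W) ((u ⊗ₜ[k] v) ⊗ₜ[k] w) = (w ⊗ₜ[k] v) ⊗ₜ[k] u := by
  simp [perm3]

/-- The left-hand side of the braid relation, for independent `R`-matrices. -/
lemma braid_lhs_eq (R1 R2 R3 : H ⊗[k] H) :
    (TensorProduct.map (braidMap k H ρV ρW R3) (LinearMap.id : U →ₗ[k] U)
        ∘ₗ (TensorProduct.assoc k V W U).symm.toLinearMap
        ∘ₗ TensorProduct.map (LinearMap.id : V →ₗ[k] V) (braidMap k H ρU ρW R2)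
        ∘ₗ (TensorProduct.assoc k V U W).toLinearMap
        ∘ₗ TensorProduct.map (braidMap k H ρU ρV R1) (LinearMap.id : W →ₗ[k] W)) =
      perm3 k ∘ₗ act3 k H ρU ρV ρW (emb23 k H R3 * emb13 k H R2 * emb12 k H R1) := by
  induction R1 using TensorProduct.induction_on with
  | zero => simp [braidMap_zero, LinearMap.comp_zero, LinearMap.zero_comp]
  | add a b ha hb =>
      simp only [braidMap_add, map_add, mul_add, TensorProduct.map_add_left,
        LinearMap.comp_add, LinearMap.add_comp, ha, hb]
  | tmul s1 t1 =>
    induction R2 using TensorProduct.induction_on with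
    | zero => simp [braidMap_zero, LinearMap.comp_zero, LinearMap.zero_comp]
    | add a b ha hb =>
        simp only [braidMap_add, map_add, mul_add, add_mul, TensorProduct.map_add_right,
          LinearMap.comp_add, LinearMap.add_comp, ha, hb]
    | tmul s2 t2 =>
      induction R3 using TensorProduct.induction_on with
      | zero => simp [braidMap_zero, LinearMap.comp_zero, LinearMap.zero_comp]
      | add a b ha hb =>
          simp only [braidMap_add, map_add, mul_add, add_mul, TensorProduct.map_add_left,
            LinearMap.comp_add, LinearMap.add_comp, ha, hb]
      | tmul s3 t3 =>
        rw [emb23_tmul, emb13_tmul, emb12_apply]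
        simp only [Algebra.TensorProduct.tmul_mul_tmul, one_mul, mul_one]
        apply TensorProduct.ext_threefold
        intro u v w
        simp only [LinearMap.comp_apply, TensorProduct.map_tmul, LinearMap.id_coe, id_eq,
          braidMap_tmul, LinearEquiv.coe_coe, TensorProduct.assoc_tmul,
          TensorProduct.assoc_symm_tmul, act3_tmul, perm3_tmul, map_mul,
          Module.End.mul_apply]

/-- The right-hand side of the braid relation, for independent `R`-matrices. -/
lemma braid_rhs_eq (R1 R2 R3 : H ⊗[k] H) :
    ((TensorProduct.assoc k W V U).symm.toLinearMap
        ∘ₗ TensorProduct.map (LinearMap.id : W →ₗ[k] W) (braidMap k H ρU ρV R3)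
        ∘ₗ (TensorProduct.assoc k W U V).toLinearMap
        ∘ₗ TensorProduct.map (braidMap k H ρU ρW R2) (LinearMap.id : V →ₗ[k] V)
        ∘ₗ (TensorProduct.assoc k U W V).symm.toLinearMap
        ∘ₗ TensorProduct.map (LinearMap.id : U →ₗ[k] U) (braidMap k H ρV ρW R1)
        ∘ₗ (TensorProduct.assoc k U V W).toLinearMap) =
      perm3 k ∘ₗ act3 k H ρU ρV ρW (emb12 k H R3 * emb13 k H R2 * emb23 k H R1) := by
  induction R1 using TensorProduct.induction_on with
  | zero => simp [braidMap_zero, LinearMap.comp_zero, LinearMap.zero_comp]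
  | add a b ha hb =>
      simp only [braidMap_add, map_add, mul_add, TensorProduct.map_add_right,
        LinearMap.comp_add, LinearMap.add_comp, ha, hb]
  | tmul s1 t1 =>
    induction R2 using TensorProduct.induction_on with
    | zero => simp [braidMap_zero, LinearMap.comp_zero, LinearMap.zero_comp]
    | add a b ha hb =>
        simp only [braidMap_add, map_add, mul_add, add_mul, TensorProduct.map_add_left,
          LinearMap.comp_add, LinearMap.add_comp, ha, hb]
    | tmul s2 t2 =>
      induction R3 using TensorProduct.induction_on with
      | zero => simp [braidMap_zero, LinearMap.comp_zero, LinearMap.zero_comp]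
      | add a b ha hb =>
          simp only [braidMap_add, map_add, mul_add, add_mul, TensorProduct.map_add_right,
            LinearMap.comp_add, LinearMap.add_comp, ha, hb]
      | tmul s3 t3 =>
        rw [emb23_tmul, emb13_tmul, emb12_apply]
        simp only [Algebra.TensorProduct.tmul_mul_tmul, one_mul, mul_one]
        apply TensorProduct.ext_threefold
        intro u v w
        simp only [LinearMap.comp_apply, TensorProduct.map_tmul, LinearMap.id_coe, id_eq,
          braidMap_tmul, LinearEquiv.coe_coe, TensorProduct.assoc_tmul,
          TensorProduct.assoc_symm_tmul, act3_tmul, perm3_tmul, map_mul,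
          Module.End.mul_apply]

/-- The braid relation for a single universal `R`-matrix. -/
lemma braid_relation_aux (R : H ⊗[k] H) (hR : IsUniversalRMatrix k H R) :
    (TensorProduct.map (braidMap k H ρV ρW R) (LinearMap.id : U →ₗ[k] U)
        ∘ₗ (TensorProduct.assoc k V W U).symm.toLinearMap
        ∘ₗ TensorProduct.map (LinearMap.id : V →ₗ[k] V) (braidMap k H ρU ρW R)
        ∘ₗ (TensorProduct.assoc k V U W).toLinearMap
        ∘ₗ TensorProduct.map (braidMap k H ρU ρV R) (LinearMap.id : W →ₗ[k] W)) =
      ((TensorProduct.assoc k W V U).symm.toLinearMap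
        ∘ₗ TensorProduct.map (LinearMap.id : W →ₗ[k] W) (braidMap k H ρU ρV R)
        ∘ₗ (TensorProduct.assoc k W U V).toLinearMap
        ∘ₗ TensorProduct.map (braidMap k H ρU ρW R) (LinearMap.id : V →ₗ[k] V)
        ∘ₗ (TensorProduct.assoc k U W V).symm.toLinearMap
        ∘ₗ TensorProduct.map (LinearMap.id : U →ₗ[k] U) (braidMap k H ρV ρW R)
        ∘ₗ (TensorProduct.assoc k U V W).toLinearMap) := by
  rw [braid_lhs_eq, braid_rhs_eq, ← qybe k H R hR]

end Aux

/-- For `H`-modules `U`, `V`, `W` over a quasitriangular Hopf algebra `(H, R)`, the braiding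
maps satisfy the braid relation
`(C_{V,W} ⊗ 1)(1 ⊗ C_{U,W})(C_{U,V} ⊗ 1) = (1 ⊗ C_{U,V})(C_{U,W} ⊗ 1)(1 ⊗ C_{V,W})`
as maps `U ⊗ V ⊗ W → W ⊗ V ⊗ U` (with the evident associators); in particular, taking
`U = V = W`, the operator `C^R_{V,V}` is a solution of the braided Yang–Baxter equation. -/
theorem braidMap_braid_relation
    (k : Type*) [CommRing k] (H : Type*) [Ring H] [HopfAlgebra k H]
    {U V W : Type*} [AddCommGroup U] [Module k U] [AddCommGroup V] [Module k V]
    [AddCommGroup W] [Module k W]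
    (ρU : H →ₐ[k] Module.End k U) (ρV : H →ₐ[k] Module.End k V)
    (ρW : H →ₐ[k] Module.End k W)
    (R : H ⊗[k] H) (hR : IsUniversalRMatrix k H R) :
    (TensorProduct.map (braidMap k H ρV ρW R) (LinearMap.id : U →ₗ[k] U)
        ∘ₗ (TensorProduct.assoc k V W U).symm.toLinearMap
        ∘ₗ TensorProduct.map (LinearMap.id : V →ₗ[k] V) (braidMap k H ρU ρW R)
        ∘ₗ (TensorProduct.assoc k V U W).toLinearMap
        ∘ₗ TensorProduct.map (braidMap k H ρU ρV R) (LinearMap.id : W →ₗ[k] W)) =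
      ((TensorProduct.assoc k W V U).symm.toLinearMap
        ∘ₗ TensorProduct.map (LinearMap.id : W →ₗ[k] W) (braidMap k H ρU ρV R)
        ∘ₗ (TensorProduct.assoc k W U V).toLinearMap
        ∘ₗ TensorProduct.map (braidMap k H ρU ρW R) (LinearMap.id : V →ₗ[k] V)
        ∘ₗ (TensorProduct.assoc k U W V).symm.toLinearMap
        ∘ₗ TensorProduct.map (LinearMap.id : U →ₗ[k] U) (braidMap k H ρV ρW R)
        ∘ₗ (TensorProduct.assoc k U V W).toLinearMap) ∧
    (TensorProduct.map (braidMap k H ρV ρV R) (LinearMap.id : V →ₗ[k] V)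
        ∘ₗ (TensorProduct.assoc k V V V).symm.toLinearMap
        ∘ₗ TensorProduct.map (LinearMap.id : V →ₗ[k] V) (braidMap k H ρV ρV R)
        ∘ₗ (TensorProduct.assoc k V V V).toLinearMap
        ∘ₗ TensorProduct.map (braidMap k H ρV ρV R) (LinearMap.id : V →ₗ[k] V)) =
      ((TensorProduct.assoc k V V V).symm.toLinearMap
        ∘ₗ TensorProduct.map (LinearMap.id : V →ₗ[k] V) (braidMap k H ρV ρV R)
        ∘ₗ (TensorProduct.assoc k V V V).toLinearMap
        ∘ₗ TensorProduct.map (braidMap k H ρV ρV R) (LinearMap.id : V →ₗ[k] V)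
        ∘ₗ (TensorProduct.assoc k V V V).symm.toLinearMap
        ∘ₗ TensorProduct.map (LinearMap.id : V →ₗ[k] V) (braidMap k H ρV ρV R)
        ∘ₗ (TensorProduct.assoc k V V V).toLinearMap) := by
  exact ⟨braid_relation_aux k H ρU ρV ρW R hR, braid_relation_aux k H ρV ρV ρV R hR⟩
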